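/- Let P ⊂ ℝⁿ be a compact convex polytope with 0 in its interior. If a sequence of normalised convex functions fₖ (continuous, convex, fₖ ≥ 0, fₖ(0)=0) converges to f uniformly on every compact subset of the interior of P, and ‖fₖ − Π(fₖ)‖_{L²(P)} ≤ C₁ for all k, then f ∈ L²(P) and ‖f − Π(f)‖_{L²(P)} ≤ lim inf ‖fₖ − Π(fₖ)‖_{L²(P)}. -/

import Mathlib

open MeasureTheory Filter Topology
open scoped ENNReal NNReal Pointwise

variable {α : Type*} [MeasurableSpace α] {μ : Measure α}

private lemma sqrt_int_eq {u : α → ℝ} (hu : MemLp u 2 μ) :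
    Real.sqrt (∫ x, u x ^ 2 ∂μ) = (eLpNorm u 2 μ).toReal := by
  rw [hu.eLpNorm_eq_integral_rpow_norm two_ne_zero ENNReal.ofNat_ne_top,
    ENNReal.toReal_ofReal (Real.rpow_nonneg (integral_nonneg fun x => by positivity) _)]
  have h2 : ((2 : ℝ≥0∞)).toReal = (2:ℝ) := by norm_num
  rw [h2]
  have : ∀ x, ‖u x‖ ^ (2:ℝ) = u x ^ 2 := by
    intro x
    rw [show (2:ℝ) = ((2:ℕ):ℝ) by norm_num, Real.rpow_natCast, Real.norm_eq_abs, sq_abs]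
  simp_rw [this]
  rw [Real.sqrt_eq_rpow]
  norm_num

private lemma sqrt_int_add_le {u v : α → ℝ} (hu : MemLp u 2 μ) (hv : MemLp v 2 μ) :
    Real.sqrt (∫ x, (u x + v x) ^ 2 ∂μ) ≤
      Real.sqrt (∫ x, u x ^ 2 ∂μ) + Real.sqrt (∫ x, v x ^ 2 ∂μ) := by
  have hadd : Real.sqrt (∫ x, (u x + v x) ^ 2 ∂μ) = (eLpNorm (u + v) 2 μ).toReal := by
    rw [← sqrt_int_eq (hu.add hv)]; rfl
  rw [hadd, sqrt_int_eq hu, sqrt_int_eq hv]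
  have h := eLpNorm_add_le hu.1 hv.1 (by norm_num : (1:ℝ≥0∞) ≤ 2)
  have : (eLpNorm (u + v) 2 μ).toReal ≤ (eLpNorm u 2 μ + eLpNorm v 2 μ).toReal :=
    ENNReal.toReal_mono (by exact ENNReal.add_ne_top.2 ⟨hu.2.ne, hv.2.ne⟩) h
  rw [ENNReal.toReal_add hu.2.ne hv.2.ne] at this
  exact this

private lemma integrable_mul2 {u v : α → ℝ} (hu : MemLp u 2 μ) (hv : MemLp v 2 μ) :
    Integrable (fun x => u x * v x) μ := by
  have h := (((hu.add hv).integrable_sq.sub hu.integrable_sq).sub hv.integrable_sq).div_const 2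
  have he : (fun x => u x * v x) = fun x => (((u + v) x ^ 2 - u x ^ 2) - v x ^ 2) / 2 := by
    ext x; simp [Pi.add_apply]; ring
  rw [he]; exact h

private lemma int_mul_le {u v : α → ℝ} (hu : MemLp u 2 μ) (hv : MemLp v 2 μ) :
    ∫ x, u x * v x ∂μ ≤ Real.sqrt (∫ x, u x ^ 2 ∂μ) * Real.sqrt (∫ x, v x ^ 2 ∂μ) := by
  have hpq : Real.HolderConjugate 2 2 := Real.HolderConjugate.two_two
  have h2 : ENNReal.ofReal (2:ℝ) = 2 := by norm_num
  have h := integral_mul_norm_le_Lp_mul_Lq (μ := μ) hpq (h2 ▸ hu) (h2 ▸ hv)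
  have hr : ∀ w : α → ℝ, (∫ x, ‖w x‖ ^ (2:ℝ) ∂μ) ^ (1/(2:ℝ)) = Real.sqrt (∫ x, w x ^ 2 ∂μ) := by
    intro w
    have : ∀ x, ‖w x‖ ^ (2:ℝ) = w x ^ 2 := fun x => by
      rw [show (2:ℝ) = ((2:ℕ):ℝ) by norm_num, Real.rpow_natCast, Real.norm_eq_abs, sq_abs]
    simp_rw [this, Real.sqrt_eq_rpow]
  rw [hr u, hr v] at h
  calc ∫ x, u x * v x ∂μ ≤ ∫ x, ‖u x‖ * ‖v x‖ ∂μ := by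
        refine integral_mono (integrable_mul2 hu hv) (integrable_mul2 hu.norm hv.norm)
          fun x => ?_
        calc u x * v x ≤ |u x * v x| := le_abs_self _
          _ = ‖u x‖ * ‖v x‖ := by rw [abs_mul]; rfl
      _ ≤ _ := h

section ClaimC

variable {n : ℕ}

local notation "E" => EuclideanSpace ℝ (Fin n)

private noncomputable def Phi (p : (EuclideanSpace ℝ (Fin n) →L[ℝ] ℝ) × ℝ) :
    EuclideanSpace ℝ (Fin n) → ℝ := fun x => p.1 x + p.2

private lemma Phi_cont (p : (E →L[ℝ] ℝ) × ℝ) : Continuous (Phi p) :=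
  (p.1.continuous.add continuous_const)

private lemma Phi_memℒp (p : (E →L[ℝ] ℝ) × ℝ) {s : Set E} (hs : IsCompact s) :
    MemLp (Phi p) 2 (volume.restrict s) := by
  rw [memLp_two_iff_integrable_sq ((Phi_cont p).aestronglyMeasurable.restrict)]
  exact (((Phi_cont p).pow 2).continuousOn).integrableOn_compact hs

private lemma sqrt_setint_le_of_bound {s : Set E} (hs : IsCompact s) {u : E → ℝ}
    (hu : Continuous u) {M : ℝ} (hM : 0 ≤ M) (hb : ∀ x ∈ s, |u x| ≤ M) :
    Real.sqrt (∫ x in s, u x ^ 2) ≤ Real.sqrt (volume s).toReal * M := by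
  have h1 : (∫ x in s, u x ^ 2) ≤ ∫ _x in s, M ^ 2 := by
    refine setIntegral_mono_on ((hu.pow 2).continuousOn.integrableOn_compact hs)
      (integrableOn_const hs.measure_lt_top.ne) hs.measurableSet fun x hx => ?_
    have := hb x hx
    calc u x ^ 2 = |u x| ^ 2 := (sq_abs _).symm
      _ ≤ M ^ 2 := by exact pow_le_pow_left₀ (abs_nonneg _) this 2
  rw [setIntegral_const] at h1
  calc Real.sqrt (∫ x in s, u x ^ 2) ≤ Real.sqrt ((volume s).toReal * M ^ 2) :=
        Real.sqrt_le_sqrt (by simpa [smul_eq_mul, measureReal_def] using h1)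
    _ = Real.sqrt (volume s).toReal * M := by
        rw [Real.sqrt_mul ENNReal.toReal_nonneg, Real.sqrt_sq hM]

private lemma nQ_cont {s : Set E} (hs : IsCompact s) :
    Continuous fun p : (E →L[ℝ] ℝ) × ℝ => Real.sqrt (∫ x in s, (Phi p x) ^ 2) := by
  obtain ⟨R, hR⟩ := hs.isBounded.subset_closedBall 0
  have hR0 : (0:ℝ) ≤ max R 0 := le_max_right _ _
  set C : ℝ := Real.sqrt (volume s).toReal * (max R 0 + 1) with hC
  have hC0 : 0 ≤ C := mul_nonneg (Real.sqrt_nonneg _) (by linarith)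
  refine LipschitzWith.continuous (K := ⟨C, hC0⟩) (LipschitzWith.of_dist_le_mul fun p q => ?_)
  have key : ∀ p q : (E →L[ℝ] ℝ) × ℝ,
      Real.sqrt (∫ x in s, (Phi p x) ^ 2) ≤
        Real.sqrt (∫ x in s, (Phi q x) ^ 2) + C * dist p q := by
    intro p q
    have hpq : ∀ x, Phi p x = Phi q x + Phi (p - q) x := by
      intro x; simp [Phi]; ring
    have h1 : Real.sqrt (∫ x in s, (Phi p x) ^ 2) ≤
        Real.sqrt (∫ x in s, (Phi q x) ^ 2) + Real.sqrt (∫ x in s, (Phi (p - q) x) ^ 2) := by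
      simp_rw [hpq]
      exact sqrt_int_add_le (Phi_memℒp q hs) (Phi_memℒp (p - q) hs)
    have h2 : Real.sqrt (∫ x in s, (Phi (p - q) x) ^ 2) ≤ C * dist p q := by
      have hb : ∀ x ∈ s, |Phi (p - q) x| ≤ (max R 0 + 1) * dist p q := by
        intro x hx
        have hx' : ‖x‖ ≤ max R 0 := le_trans (by simpa using hR hx) (le_max_left _ _)
        have e1 : |(p.1 - q.1) x| ≤ ‖p.1 - q.1‖ * ‖x‖ := (p.1 - q.1).le_opNorm x
        have hd1 : ‖p.1 - q.1‖ ≤ dist p q := by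
          rw [Prod.dist_eq, dist_eq_norm]; exact le_max_left _ _
        have hd2 : |p.2 - q.2| ≤ dist p q := by
          rw [Prod.dist_eq]; exact le_trans (le_of_eq (Real.dist_eq _ _).symm) (le_max_right _ _)
        have : |Phi (p - q) x| ≤ |(p.1 - q.1) x| + |p.2 - q.2| := by
          simp only [Phi, Prod.fst_sub, Prod.snd_sub, ContinuousLinearMap.sub_apply]
          exact abs_add_le _ _
        calc |Phi (p - q) x| ≤ ‖p.1 - q.1‖ * ‖x‖ + |p.2 - q.2| := by linarith [e1, this]
          _ ≤ dist p q * max R 0 + dist p q := by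
              have := dist_nonneg (x := p) (y := q)
              nlinarith [norm_nonneg (p.1 - q.1), norm_nonneg x]
          _ = (max R 0 + 1) * dist p q := by ring
      calc Real.sqrt (∫ x in s, (Phi (p - q) x) ^ 2) ≤
            Real.sqrt (volume s).toReal * ((max R 0 + 1) * dist p q) :=
            sqrt_setint_le_of_bound hs (Phi_cont _)
              (mul_nonneg (by linarith) dist_nonneg) hb
        _ = C * dist p q := by rw [hC]; ring
    linarith
  have k1 := key p q
  have k2 := key q p
  rw [Real.dist_eq, abs_le]
  constructor
  · have : dist q p = dist p q := dist_comm _ _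
    change -(C * dist p q) ≤ _
    linarith [k2, this ▸ k2]
  · change _ ≤ C * dist p q
    linarith

set_option maxHeartbeats 1000000 in
private lemma affine_L2_bound (P : Set (EuclideanSpace ℝ (Fin n)))
    (hPcomp : IsCompact P) {r : ℝ} (hr : 0 < r) :
    ∃ c : ℝ, 0 < c ∧ ∀ a : EuclideanSpace ℝ (Fin n) →ᵃ[ℝ] ℝ,
      (∫ x in P, (a x) ^ 2) ≤ c * ∫ x in Metric.closedBall (0:EuclideanSpace ℝ (Fin n)) r,
        (a x) ^ 2 := by
  classical
  set B : Set E := Metric.closedBall (0:E) r with hBdef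
  have hBcomp : IsCompact B := isCompact_closedBall _ _
  -- positivity of the ball seminorm
  have hpos : ∀ p : (E →L[ℝ] ℝ) × ℝ, p ≠ 0 → 0 < ∫ x in B, (Phi p x) ^ 2 := by
    intro p hp
    have hnon : ∃ x₀ ∈ Metric.ball (0:E) r, Phi p x₀ ≠ 0 := by
      by_contra h
      push_neg at h
      apply hp
      have h0 : p.2 = 0 := by
        have := h 0 (Metric.mem_ball_self hr)
        simpa [Phi] using this
      have h1 : p.1 = 0 := by
        ext y
        simp only [ContinuousLinearMap.zero_apply]
        rcases eq_or_ne y 0 with hy | hy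
        · simp [hy]
        · have hny : 0 < ‖y‖ := norm_pos_iff.2 hy
          set t : ℝ := r / (2 * ‖y‖) with ht
          have htpos : 0 < t := by positivity
          have htn : t * ‖y‖ = r / 2 := by
            rw [ht]; field_simp
          have hmem : t • y ∈ Metric.ball (0:E) r := by
            rw [Metric.mem_ball, dist_zero_right, norm_smul, Real.norm_eq_abs,
              abs_of_pos htpos, htn]
            linarith
          have hz := h (t • y) hmem
          simp only [Phi, h0, add_zero, _root_.map_smul, smul_eq_mul] at hz
          rcases mul_eq_zero.1 hz with h' | h'
          · exact absurd h' htpos.ne'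
          · simpa using h'
      exact Prod.ext h1 h0
    obtain ⟨x₀, hx₀B, hx₀⟩ := hnon
    rw [setIntegral_pos_iff_support_of_nonneg_ae
      (Eventually.of_forall fun x => sq_nonneg _)
      (((Phi_cont p).pow 2).continuousOn.integrableOn_compact hBcomp)]
    set U : Set E := Metric.ball (0:E) r ∩ {x | Phi p x ≠ 0} with hU
    have hUopen : IsOpen U := Metric.isOpen_ball.inter (isOpen_ne_fun (Phi_cont p) continuous_const)
    have hUne : U.Nonempty := ⟨x₀, hx₀B, hx₀⟩
    have hUsub : U ⊆ (Function.support fun x => (Phi p x) ^ 2) ∩ B := by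
      rintro x ⟨hx1, hx2⟩
      exact ⟨by simp [Function.mem_support, pow_eq_zero_iff]; exact hx2, Metric.ball_subset_closedBall hx1⟩
    exact lt_of_lt_of_le (hUopen.measure_pos volume hUne) (measure_mono hUsub)
  -- sphere compactness
  set nQ : (E →L[ℝ] ℝ) × ℝ → ℝ := fun p => Real.sqrt (∫ x in P, (Phi p x) ^ 2) with hnQ
  set nq : (E →L[ℝ] ℝ) × ℝ → ℝ := fun p => Real.sqrt (∫ x in B, (Phi p x) ^ 2) with hnq
  have hsph : IsCompact (Metric.sphere (0:(E →L[ℝ] ℝ) × ℝ) 1) := isCompact_sphere _ _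
  have hsphne : (Metric.sphere (0:(E →L[ℝ] ℝ) × ℝ) 1).Nonempty := by
    refine ⟨(0, 1), ?_⟩
    simp [Prod.norm_def]
  obtain ⟨p₀, hp₀mem, hp₀min⟩ := hsph.exists_isMinOn hsphne ((nQ_cont hBcomp).continuousOn)
  obtain ⟨q₀, _, hq₀max⟩ := hsph.exists_isMaxOn hsphne ((nQ_cont hPcomp).continuousOn)
  have hm : 0 < nq p₀ := by
    apply Real.sqrt_pos.2
    apply hpos
    intro h0
    rw [h0] at hp₀mem
    simp at hp₀mem
  set κ : ℝ := nQ q₀ / nq p₀ with hκ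
  have hκ0 : 0 ≤ κ := div_nonneg (Real.sqrt_nonneg _) hm.le
  -- homogeneity + comparison
  have hcomp : ∀ p : (E →L[ℝ] ℝ) × ℝ, nQ p ≤ κ * nq p := by
    intro p
    rcases eq_or_ne p 0 with hp | hp
    · subst hp
      have : Phi (0 : (E →L[ℝ] ℝ) × ℝ) = fun _ => (0:ℝ) := by ext x; simp [Phi]
      simp [hnQ, hnq, this]
    · set u := ‖p‖⁻¹ • p with hu
      have hpn : 0 < ‖p‖ := norm_pos_iff.2 hp
      have humem : u ∈ Metric.sphere (0:(E →L[ℝ] ℝ) × ℝ) 1 := by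
        have hn1 : ‖u‖ = 1 := by
          have hns := norm_smul (‖p‖⁻¹) p
          rw [hu, hns, norm_inv, norm_norm, inv_mul_cancel₀ hpn.ne']
        simpa [mem_sphere_iff_norm] using hn1
      have hscale : ∀ (t : ℝ) (q : (E →L[ℝ] ℝ) × ℝ) (s : Set E),
          Real.sqrt (∫ x in s, (Phi (t • q) x) ^ 2) =
            |t| * Real.sqrt (∫ x in s, (Phi q x) ^ 2) := by
        intro t q s
        have : ∀ x, Phi (t • q) x = t * Phi q x := by
          intro x; simp [Phi, Prod.smul_fst, Prod.smul_snd, smul_eq_mul]; ring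
        simp_rw [this, mul_pow]
        rw [integral_const_mul, Real.sqrt_mul (sq_nonneg t), Real.sqrt_sq_eq_abs]
      have hpu : p = ‖p‖ • u := by
        rw [hu, smul_smul, mul_inv_cancel₀ hpn.ne', one_smul]
      have e1 : nQ p = ‖p‖ * nQ u := by
        conv_lhs => rw [hpu]
        simpa [hnQ, abs_of_pos hpn] using hscale ‖p‖ u P
      have e2 : nq p = ‖p‖ * nq u := by
        conv_lhs => rw [hpu]
        simpa [hnq, abs_of_pos hpn] using hscale ‖p‖ u B
      rw [e1, e2]
      have h1 : nQ u ≤ nQ q₀ := hq₀max humem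
      have h2 : nq p₀ ≤ nq u := hp₀min humem
      have hx : κ * nq p₀ = nQ q₀ := div_mul_cancel₀ _ hm.ne'
      calc ‖p‖ * nQ u ≤ ‖p‖ * nQ q₀ := mul_le_mul_of_nonneg_left h1 (norm_nonneg _)
        _ = κ * (‖p‖ * nq p₀) := by
              rw [show κ * (‖p‖ * nq p₀) = ‖p‖ * (κ * nq p₀) by ring, hx]
        _ ≤ κ * (‖p‖ * nq u) :=
              mul_le_mul_of_nonneg_left
                (mul_le_mul_of_nonneg_left h2 (norm_nonneg _)) hκ0
  refine ⟨max (κ ^ 2) 1, lt_of_lt_of_le one_pos (le_max_right _ _), fun a => ?_⟩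
  set p : (E →L[ℝ] ℝ) × ℝ := (LinearMap.toContinuousLinearMap a.linear, a 0) with hpdef
  have ha : ∀ x, a x = Phi p x := by
    intro x
    rw [Phi]
    simp only [hpdef, LinearMap.coe_toContinuousLinearMap']
    exact congrFun a.decomp x
  simp_rw [ha]
  have hQ0 : 0 ≤ ∫ x in P, (Phi p x) ^ 2 := integral_nonneg fun x => sq_nonneg _
  have hq0 : 0 ≤ ∫ x in B, (Phi p x) ^ 2 := integral_nonneg fun x => sq_nonneg _
  have := hcomp p
  have h1 : (nQ p) ^ 2 ≤ (κ * nq p) ^ 2 := by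
    have h0 : 0 ≤ nQ p := Real.sqrt_nonneg _
    nlinarith
  rw [hnQ, hnq] at h1
  rw [Real.sq_sqrt hQ0] at h1
  rw [mul_pow, Real.sq_sqrt hq0] at h1
  calc (∫ x in P, (Phi p x) ^ 2) ≤ κ ^ 2 * ∫ x in B, (Phi p x) ^ 2 := h1
    _ ≤ max (κ ^ 2) 1 * ∫ x in B, (Phi p x) ^ 2 := by
        exact mul_le_mul_of_nonneg_right (le_max_left _ _) hq0

end ClaimC

section Main

variable {n : ℕ}

local notation "E" => EuclideanSpace ℝ (Fin n)

private lemma memL2_of_continuousOn {s : Set (EuclideanSpace ℝ (Fin n))} (hs : IsCompact s)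
    {u : EuclideanSpace ℝ (Fin n) → ℝ} (hu : ContinuousOn u s) :
    MemLp u 2 (volume.restrict s) := by
  rw [memLp_two_iff_integrable_sq (hu.aestronglyMeasurable hs.measurableSet)]
  exact (hu.pow 2).integrableOn_compact hs

set_option maxHeartbeats 2000000 in
theorem seminorm_lsc_under_locally_uniform_convergence'
    (P : Set (EuclideanSpace ℝ (Fin n)))
    (hPcomp : IsCompact P) (hPconv : Convex ℝ P)
    (hP0 : (0 : EuclideanSpace ℝ (Fin n)) ∈ interior P)
    (f : EuclideanSpace ℝ (Fin n) → ℝ)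
    (fk : ℕ → EuclideanSpace ℝ (Fin n) → ℝ)
    (hfkc : ∀ k, ContinuousOn (fk k) P)
    (hconv : ∀ K : Set (EuclideanSpace ℝ (Fin n)), K ⊆ interior P → IsCompact K →
      TendstoUniformlyOn fk f atTop K)
    (gk : ℕ → EuclideanSpace ℝ (Fin n) →ᵃ[ℝ] ℝ)
    (hgk : ∀ k, ∀ a : EuclideanSpace ℝ (Fin n) →ᵃ[ℝ] ℝ,
      ∫ x in P, (fk k x - gk k x) * a x = 0)
    (C₁ : ℝ)
    (hbd : ∀ k, Real.sqrt (∫ x in P, (fk k x - gk k x) ^ 2) ≤ C₁) :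
    IntegrableOn (fun x => f x ^ 2) P volume ∧
      ∀ g : EuclideanSpace ℝ (Fin n) →ᵃ[ℝ] ℝ,
        (∀ a : EuclideanSpace ℝ (Fin n) →ᵃ[ℝ] ℝ,
          ∫ x in P, (f x - g x) * a x = 0) →
        Real.sqrt (∫ x in P, (f x - g x) ^ 2) ≤
          liminf (fun k => Real.sqrt (∫ x in P, (fk k x - gk k x) ^ 2)) atTop := by
  have hPmeas : MeasurableSet P := hPcomp.isClosed.measurableSet
  have hPfin : volume P < ⊤ := hPcomp.measure_lt_top
  -- the boundary of `P` is Lebesgue-null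
  have hfront : volume (frontier P) = 0 := hPconv.addHaar_frontier volume
  have hPae : P =ᵐ[volume] interior P := by
    rw [Filter.eventuallyEq_set]
    have h1 : volume (P \ interior P) = 0 := by
      refine measure_mono_null (fun x hx => ?_) hfront
      exact ⟨subset_closure hx.1, hx.2⟩
    filter_upwards [measure_eq_zero_iff_ae_notMem.1 h1] with x hx
    constructor
    · intro hxP
      by_contra hxi
      exact hx ⟨hxP, hxi⟩
    · exact fun hxi => interior_subset hxi
  have hrestr : volume.restrict P = volume.restrict (interior P) :=
    Measure.restrict_congr_set hPae
  -- a closed ball inside the interior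
  obtain ⟨r, hr, hball⟩ : ∃ r > 0,
      Metric.closedBall (0:EuclideanSpace ℝ (Fin n)) r ⊆ interior P := by
    rcases Metric.isOpen_iff.1 isOpen_interior 0 hP0 with ⟨ε, hε, hb⟩
    exact ⟨ε/2, by linarith, (Metric.closedBall_subset_ball (by linarith)).trans hb⟩
  set B : Set (EuclideanSpace ℝ (Fin n)) := Metric.closedBall 0 r with hBdef
  have hBcomp : IsCompact B := isCompact_closedBall _ _
  have hBP : B ⊆ P := hball.trans interior_subset
  -- continuity of f on the interior
  have hflu : TendstoLocallyUniformlyOn fk f atTop (interior P) := by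
    rw [tendstoLocallyUniformlyOn_iff_forall_isCompact isOpen_interior]
    exact fun K hK hKc => hconv K hK hKc
  have hfc : ContinuousOn f (interior P) :=
    hflu.continuousOn (Eventually.of_forall fun k => (hfkc k).mono interior_subset).frequently
  -- pointwise convergence on the interior
  have hptw : ∀ x ∈ interior P, Tendsto (fun k => fk k x) atTop (𝓝 (f x)) := by
    intro x hx
    exact (hconv {x} (by simpa using hx) isCompact_singleton).tendsto_at rfl
  -- MemLp facts
  have hfk2 : ∀ k, MemLp (fk k) 2 (volume.restrict P) :=
    fun k => memL2_of_continuousOn hPcomp (hfkc k)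
  have hgk2 : ∀ k, MemLp (fun x => gk k x) 2 (volume.restrict P) :=
    fun k => memL2_of_continuousOn hPcomp (gk k).continuous_of_finiteDimensional.continuousOn
  have hdiff2 : ∀ k, MemLp (fun x => fk k x - gk k x) 2 (volume.restrict P) :=
    fun k => (hfk2 k).sub (hgk2 k)
  have hC₁0 : 0 ≤ C₁ := le_trans (Real.sqrt_nonneg _) (hbd 0)
  have hbd2 : ∀ k, (∫ x in P, (fk k x - gk k x) ^ 2) ≤ C₁ ^ 2 := by
    intro k
    have h0 : 0 ≤ ∫ x in P, (fk k x - gk k x) ^ 2 := integral_nonneg fun x => sq_nonneg _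
    have := pow_le_pow_left₀ (Real.sqrt_nonneg _) (hbd k) 2
    rwa [Real.sq_sqrt h0] at this
  -- uniform bound for fk on the ball
  obtain ⟨Mf, hMf⟩ := hBcomp.exists_bound_of_continuousOn (hfc.mono hball)
  have huB := hconv B hball hBcomp
  rw [Metric.tendstoUniformlyOn_iff] at huB
  obtain ⟨N, hN⟩ := (huB 1 one_pos).exists_forall_of_atTop
  have hfkB : ∀ k, N ≤ k → ∀ x ∈ B, |fk k x| ≤ Mf + 1 := by
    intro k hk x hx
    have h1 := hN k hk x hx
    have h2 := hMf x hx
    rw [Real.dist_eq] at h1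
    rw [Real.norm_eq_abs] at h2
    have := abs_sub_abs_le_abs_sub (fk k x) (f x)
    rw [abs_sub_comm] at this
    linarith [abs_nonneg (fk k x), neg_abs_le (fk k x)]
  -- integral bound for gk on the ball
  have hballP : ∀ k, (∫ x in B, (fk k x - gk k x) ^ 2) ≤ C₁ ^ 2 := by
    intro k
    refine le_trans (setIntegral_mono_set ((hdiff2 k).integrable_sq)
      (Eventually.of_forall fun x => sq_nonneg _) (HasSubset.Subset.eventuallyLE hBP)) (hbd2 k)
  set VB : ℝ := (volume B).toReal with hVB
  have hVB0 : 0 ≤ VB := ENNReal.toReal_nonneg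
  have hfkB2 : ∀ k, N ≤ k → (∫ x in B, (fk k x) ^ 2) ≤ VB * (Mf + 1) ^ 2 := by
    intro k hk
    have hint : IntegrableOn (fun x => (fk k x) ^ 2) B :=
      (((hfkc k).mono hBP).pow 2).integrableOn_compact hBcomp
    have h1 : (∫ x in B, (fk k x) ^ 2) ≤ ∫ _x in B, (Mf + 1) ^ 2 := by
      refine setIntegral_mono_on hint (integrableOn_const hBcomp.measure_lt_top.ne)
        hBcomp.measurableSet fun x hx => ?_
      calc (fk k x) ^ 2 = |fk k x| ^ 2 := (sq_abs _).symm
        _ ≤ (Mf + 1) ^ 2 := pow_le_pow_left₀ (abs_nonneg _) (hfkB k hk x hx) 2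
    rwa [setIntegral_const, smul_eq_mul, measureReal_def] at h1
  have hball_bd : ∀ k, N ≤ k →
      (∫ x in B, (gk k x) ^ 2) ≤ 2 * (VB * (Mf + 1) ^ 2) + 2 * C₁ ^ 2 := by
    intro k hk
    have hint1 : IntegrableOn (fun x => (fk k x) ^ 2) B :=
      (((hfkc k).mono hBP).pow 2).integrableOn_compact hBcomp
    have hint2 : IntegrableOn (fun x => (fk k x - gk k x) ^ 2) B :=
      MeasureTheory.IntegrableOn.mono_set ((hdiff2 k).integrable_sq) hBP
    have hptwise : ∀ x, (gk k x) ^ 2 ≤ 2 * (fk k x) ^ 2 + 2 * (fk k x - gk k x) ^ 2 := by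
      intro x; nlinarith [sq_nonneg (fk k x + (fk k x - gk k x))]
    have hint3 : IntegrableOn (fun x => (gk k x) ^ 2) B :=
      (((gk k).continuous_of_finiteDimensional.continuousOn.pow 2)).integrableOn_compact hBcomp
    have h1 : (∫ x in B, (gk k x) ^ 2) ≤
        ∫ x in B, (2 * (fk k x) ^ 2 + 2 * (fk k x - gk k x) ^ 2) := by
      refine integral_mono hint3 ?_ fun x => hptwise x
      exact (hint1.const_mul 2).add (hint2.const_mul 2)
    rw [integral_add (hint1.const_mul 2) (hint2.const_mul 2),
      integral_const_mul, integral_const_mul] at h1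
    have := hfkB2 k hk
    have := hballP k
    linarith
  -- norm equivalence: bound gk on all of P
  obtain ⟨c, hc, hcomp⟩ := affine_L2_bound P hPcomp hr
  set G2 : ℝ := c * (2 * (VB * (Mf + 1) ^ 2) + 2 * C₁ ^ 2) with hG2def
  have hG2 : ∀ k, N ≤ k → (∫ x in P, (gk k x) ^ 2) ≤ G2 := fun k hk =>
    (hcomp (gk k)).trans (mul_le_mul_of_nonneg_left (hball_bd k hk) hc.le)
  have hG2nn : 0 ≤ G2 :=
    le_trans (integral_nonneg fun x => sq_nonneg _) (hG2 N le_rfl)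
  -- bound for ∫ fk²
  set D : ℝ := 2 * C₁ ^ 2 + 2 * G2 with hDdef
  have hfkP2 : ∀ k, N ≤ k → (∫ x in P, (fk k x) ^ 2) ≤ D := by
    intro k hk
    have hint1 : IntegrableOn (fun x => (fk k x - gk k x) ^ 2) P := (hdiff2 k).integrable_sq
    have hint2 : IntegrableOn (fun x => (gk k x) ^ 2) P := (hgk2 k).integrable_sq
    have hptwise : ∀ x, (fk k x) ^ 2 ≤
        2 * (fk k x - gk k x) ^ 2 + 2 * (gk k x) ^ 2 := by
      intro x; nlinarith [sq_nonneg (fk k x - 2 * gk k x)]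
    have h1 : (∫ x in P, (fk k x) ^ 2) ≤
        ∫ x in P, (2 * (fk k x - gk k x) ^ 2 + 2 * (gk k x) ^ 2) := by
      refine integral_mono ((hfk2 k).integrable_sq) ?_ fun x => hptwise x
      exact (hint1.const_mul 2).add (hint2.const_mul 2)
    rw [integral_add (hint1.const_mul 2) (hint2.const_mul 2),
      integral_const_mul, integral_const_mul] at h1
    have := hbd2 k
    have := hG2 k hk
    linarith
  -- Part A : f² is integrable on P
  have hfm' : AEStronglyMeasurable (fun x => f x ^ 2) (volume.restrict (interior P)) :=
    (hfc.pow 2).aestronglyMeasurable isOpen_interior.measurableSet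
  have hA : IntegrableOn (fun x => f x ^ 2) P volume := by
    rw [IntegrableOn, hrestr]
    refine ⟨hfm', ?_⟩
    rw [hasFiniteIntegral_iff_ofReal (Eventually.of_forall fun x => sq_nonneg _)]
    have hmeasfk : ∀ k : ℕ, AEMeasurable (fun x => ENNReal.ofReal (fk k x ^ 2))
        (volume.restrict (interior P)) := by
      intro k
      exact (ENNReal.measurable_ofReal.comp_aemeasurable
        ((((hfkc k).mono interior_subset).pow 2).aemeasurable isOpen_interior.measurableSet))
    have hlim : ∀ᵐ x ∂(volume.restrict (interior P)),
        ENNReal.ofReal (f x ^ 2) =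
          liminf (fun k => ENNReal.ofReal (fk k x ^ 2)) atTop := by
      filter_upwards [ae_restrict_mem isOpen_interior.measurableSet] with x hx
      have h1 : Tendsto (fun k => ENNReal.ofReal (fk k x ^ 2)) atTop
          (𝓝 (ENNReal.ofReal (f x ^ 2))) := by
        exact (ENNReal.continuous_ofReal.tendsto _).comp (((hptw x hx).pow 2))
      exact (h1.liminf_eq).symm
    calc ∫⁻ x in interior P, ENNReal.ofReal (f x ^ 2)
        = ∫⁻ x in interior P, liminf (fun k => ENNReal.ofReal (fk k x ^ 2)) atTop :=
          lintegral_congr_ae hlim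
      _ ≤ liminf (fun k => ∫⁻ x in interior P, ENNReal.ofReal (fk k x ^ 2)) atTop :=
          lintegral_liminf_le' hmeasfk
      _ ≤ ENNReal.ofReal D := by
          have hev : ∀ᶠ k in atTop,
              (∫⁻ x in interior P, ENNReal.ofReal (fk k x ^ 2)) ≤ ENNReal.ofReal D := by
            filter_upwards [eventually_ge_atTop N] with k hk
            have hint : Integrable (fun x => fk k x ^ 2) (volume.restrict (interior P)) := by
              rw [← hrestr]; exact (hfk2 k).integrable_sq
            rw [← ofReal_integral_eq_lintegral_ofReal hint
              (Eventually.of_forall fun x => sq_nonneg _)]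
            refine ENNReal.ofReal_le_ofReal ?_
            have : (∫ x in interior P, fk k x ^ 2) = ∫ x in P, fk k x ^ 2 := by
              rw [← hrestr]
            rw [this]
            exact hfkP2 k hk
          calc liminf (fun k => ∫⁻ x in interior P, ENNReal.ofReal (fk k x ^ 2)) atTop
              ≤ liminf (fun _ : ℕ => ENNReal.ofReal D) atTop := liminf_le_liminf hev
            _ = ENNReal.ofReal D := liminf_const _
      _ < ⊤ := ENNReal.ofReal_lt_top
  refine ⟨hA, ?_⟩
  -- Part B
  intro g hg
  set a : ℕ → ℝ := fun k => Real.sqrt (∫ x in P, (fk k x - gk k x) ^ 2) with hadef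
  set L : ℝ := liminf a atTop with hLdef
  have hab : ∀ k, 0 ≤ a k := fun k => Real.sqrt_nonneg _
  have hBddAbove : IsBoundedUnder (· ≤ ·) atTop a := isBoundedUnder_of ⟨C₁, hbd⟩
  have hBddBelow : IsBoundedUnder (· ≥ ·) atTop a := isBoundedUnder_of ⟨0, hab⟩
  have hL0 : 0 ≤ L :=
    le_liminf_of_le hBddAbove.isCoboundedUnder_ge (Eventually.of_forall hab)
  have hfm : AEStronglyMeasurable f (volume.restrict P) := by
    rw [hrestr]; exact hfc.aestronglyMeasurable isOpen_interior.measurableSet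
  have hf2 : MemLp f 2 (volume.restrict P) := (memLp_two_iff_integrable_sq hfm).2 hA
  have hg2 : MemLp (fun x => g x) 2 (volume.restrict P) :=
    memL2_of_continuousOn hPcomp g.continuous_of_finiteDimensional.continuousOn
  have hfg2 : MemLp (fun x => f x - g x) 2 (volume.restrict P) := hf2.sub hg2
  set S : ℝ := Real.sqrt (∫ x in P, (f x - g x) ^ 2) with hSdef
  have hS0 : 0 ≤ S := Real.sqrt_nonneg _
  have hSint : 0 ≤ ∫ x in P, (f x - g x) ^ 2 := integral_nonneg fun x => sq_nonneg _
  have hS2 : S ^ 2 = ∫ x in P, (f x - g x) ^ 2 := Real.sq_sqrt hSint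
  -- the key orthogonality identity
  have key1 : ∀ k, (∫ x in P, (f x - g x) ^ 2) =
      ∫ x in P, (f x - g x) * (f x - gk k x) := by
    intro k
    have i1 : Integrable (fun x => (f x - g x) ^ 2) (volume.restrict P) :=
      hfg2.integrable_sq
    have i2 : Integrable (fun x => (f x - g x) * g x) (volume.restrict P) :=
      integrable_mul2 hfg2 hg2
    have i3 : Integrable (fun x => (f x - g x) * gk k x) (volume.restrict P) :=
      integrable_mul2 hfg2 (hgk2 k)
    have i23 : Integrable (fun x => (f x - g x) * g x - (f x - g x) * gk k x)
        (volume.restrict P) := i2.sub i3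
    calc (∫ x in P, (f x - g x) ^ 2)
        = (∫ x in P, (f x - g x) ^ 2) +
            ((∫ x in P, (f x - g x) * g x) - ∫ x in P, (f x - g x) * gk k x) := by
          rw [hg g, hg (gk k)]; ring
      _ = ∫ x in P, ((f x - g x) ^ 2 + ((f x - g x) * g x - (f x - g x) * gk k x)) := by
          rw [integral_add i1 i23, integral_sub i2 i3]
      _ = ∫ x in P, (f x - g x) * (f x - gk k x) :=
          integral_congr_ae (Eventually.of_forall fun x => by ring)
  -- exhaustion of the interior by compact subsets
  set t : ℕ → ℝ := fun m => (m : ℝ) / (m + 1) with htdef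
  have ht0 : ∀ m, 0 ≤ t m := fun m => by positivity
  have ht1 : ∀ m, t m < 1 := fun m => by
    rw [htdef, div_lt_one (by positivity)]; linarith
  set Km : ℕ → Set (EuclideanSpace ℝ (Fin n)) := fun m => t m • P with hKmdef
  have hKmcomp : ∀ m, IsCompact (Km m) := fun m => hPcomp.smul (t m)
  have hKmint : ∀ m, Km m ⊆ interior P := by
    rintro m x ⟨p, hp, rfl⟩
    have := hPconv.combo_self_interior_mem_interior (a := t m) (b := 1 - t m) hp hP0
      (ht0 m) (by linarith [ht1 m]) (by ring)
    simpa using this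
  have hKmmono : Monotone Km := by
    intro m m' hmm'
    rcases Nat.eq_zero_or_pos m' with rfl | hm'
    · have hm0 : m = 0 := Nat.le_zero.1 hmm'
      subst hm0; exact le_rfl
    · have h0 : 0 < t m' := div_pos (by exact_mod_cast hm') (by positivity)
      have htm : t m ≤ t m' := by
        have hcast : (m:ℝ) ≤ m' := Nat.cast_le.2 hmm'
        rw [htdef, div_le_div_iff₀ (by positivity) (by positivity)]
        nlinarith
      rintro x ⟨p, hp, rfl⟩
      refine ⟨(t m / t m') • p, ?_, ?_⟩
      · exact hPconv.smul_mem_of_zero_mem (interior_subset hP0) hp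
          ⟨by positivity, by rw [div_le_one h0]; exact htm⟩
      · show t m' • (t m / t m') • p = t m • p
        rw [smul_smul, mul_div_cancel₀ _ h0.ne']
  have hKuni : interior P ⊆ ⋃ m, Km m := by
    intro x hx
    have h1 : Tendsto t atTop (𝓝 1) := tendsto_natCast_div_add_atTop (1:ℝ)
    have h2 : Tendsto (fun m => (t m)⁻¹) atTop (𝓝 1) := by
      have := h1.inv₀ one_ne_zero; simpa using this
    have htt : Tendsto (fun m => (t m)⁻¹ • x) atTop (𝓝 x) := by
      have := h2.smul_const x; simpa using this
    have hev : ∀ᶠ m in atTop, (t m)⁻¹ • x ∈ interior P :=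
      htt (isOpen_interior.mem_nhds hx)
    obtain ⟨m, hm1, hm2⟩ := (hev.and (eventually_ge_atTop 1)).exists
    refine Set.mem_iUnion.2 ⟨m, ?_⟩
    have htm0 : 0 < t m := div_pos (by exact_mod_cast hm2) (by positivity)
    exact ⟨(t m)⁻¹ • x, interior_subset hm1,
      show t m • (t m)⁻¹ • x = x by rw [smul_inv_smul₀ htm0.ne']⟩
  have hKsub : ∀ m, Km m ⊆ P := fun m => (hKmint m).trans interior_subset
  have hiK : IntegrableOn (fun x => (f x - g x) ^ 2) (⋃ m, Km m) volume :=
    IntegrableOn.mono_set hfg2.integrable_sq (Set.iUnion_subset hKsub)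
  have hUnion_ae : (⋃ m, Km m) =ᵐ[volume] P := by
    have hPdiff : volume (P \ interior P) = 0 := by
      refine measure_mono_null (fun x hx => ?_) hfront
      exact ⟨subset_closure hx.1, hx.2⟩
    rw [MeasureTheory.ae_eq_set]
    constructor
    · rw [Set.diff_eq_empty.2 (Set.iUnion_subset hKsub)]; simp
    · refine measure_mono_null (fun x hx => ?_) hPdiff
      exact ⟨hx.1, fun hxi => hx.2 (hKuni hxi)⟩
  have htendK : Tendsto (fun m => ∫ x in Km m, (f x - g x) ^ 2) atTop
      (𝓝 (∫ x in P, (f x - g x) ^ 2)) := by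
    have h := tendsto_setIntegral_of_monotone
      (fun m => (hKmcomp m).isClosed.measurableSet) hKmmono hiK
    rwa [setIntegral_congr_set hUnion_ae] at h
  -- main epsilon estimate
  have hmain : ∀ ε : ℝ, 0 < ε → S ^ 2 ≤ S * L + ε := by
    intro ε hε
    set W : ℝ := Real.sqrt (∫ x in P, f x ^ 2) + Real.sqrt G2 with hW
    have hW0 : 0 ≤ W := add_nonneg (Real.sqrt_nonneg _) (Real.sqrt_nonneg _)
    set δ : ℝ := ε / (4 * (S + 1)) with hδ
    have hδ0 : 0 < δ := by
      rw [hδ]; positivity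
    obtain ⟨m, hm⟩ : ∃ m, (∫ x in P, (f x - g x) ^ 2) -
        (∫ x in Km m, (f x - g x) ^ 2) ≤ (ε / (2 * (W + 1))) ^ 2 := by
      have hc : (0:ℝ) < (ε / (2 * (W + 1))) ^ 2 := by positivity
      obtain ⟨m0, hm0⟩ := (Metric.tendsto_atTop.1 htendK) _ hc
      refine ⟨m0, ?_⟩
      have := hm0 m0 le_rfl
      rw [Real.dist_eq, abs_lt] at this
      linarith [this.1]
    set K : Set (EuclideanSpace ℝ (Fin n)) := Km m with hKdef
    have hKP : K ⊆ P := hKsub m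
    have hKmeas : MeasurableSet K := (hKmcomp m).isClosed.measurableSet
    have hrK : volume.restrict K ≤ volume.restrict P := Measure.restrict_mono hKP le_rfl
    have hrD : volume.restrict (P \ K) ≤ volume.restrict P :=
      Measure.restrict_mono Set.diff_subset le_rfl
    have hfK : MemLp f 2 (volume.restrict K) := hf2.mono_measure hrK
    have hfD : MemLp f 2 (volume.restrict (P \ K)) := hf2.mono_measure hrD
    have hfgK : MemLp (fun x => f x - g x) 2 (volume.restrict K) := hfg2.mono_measure hrK
    have hfgD : MemLp (fun x => f x - g x) 2 (volume.restrict (P \ K)) :=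
      hfg2.mono_measure hrD
    -- tail smallness
    have hTled : Real.sqrt (∫ x in P \ K, (f x - g x) ^ 2) ≤ ε / (2 * (W + 1)) := by
      have hdiffint : (∫ x in P \ K, (f x - g x) ^ 2) =
          (∫ x in P, (f x - g x) ^ 2) - ∫ x in K, (f x - g x) ^ 2 :=
        integral_diff hKmeas hfg2.integrable_sq hKP
      rw [hdiffint]
      calc Real.sqrt ((∫ x in P, (f x - g x) ^ 2) - ∫ x in K, (f x - g x) ^ 2)
          ≤ Real.sqrt ((ε / (2 * (W + 1))) ^ 2) := Real.sqrt_le_sqrt hm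
        _ = ε / (2 * (W + 1)) := Real.sqrt_sq (by positivity)
    -- eventual smallness of the uniform-convergence error on K
    have hbev : ∀ᶠ k in atTop, Real.sqrt (∫ x in K, (f x - fk k x) ^ 2) ≤ δ := by
      set η : ℝ := δ / (Real.sqrt ((volume P).toReal) + 1) with hη
      have hη0 : 0 < η := by rw [hη]; positivity
      have huK := hconv K (hKmint m) (hKmcomp m)
      rw [Metric.tendstoUniformlyOn_iff] at huK
      filter_upwards [huK η hη0] with k hk
      have hintK : IntegrableOn (fun x => (f x - fk k x) ^ 2) K volume :=
        (hfK.sub ((hfk2 k).mono_measure hrK)).integrable_sq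
      have h2 : (∫ x in K, (f x - fk k x) ^ 2) ≤ ∫ _x in K, η ^ 2 := by
        refine setIntegral_mono_on hintK
          (integrableOn_const (hKmcomp m).measure_lt_top.ne) hKmeas fun x hx => ?_
        have hdx := hk x hx
        rw [Real.dist_eq] at hdx
        calc (f x - fk k x) ^ 2 = |f x - fk k x| ^ 2 := (sq_abs _).symm
          _ ≤ η ^ 2 := pow_le_pow_left₀ (abs_nonneg _) hdx.le 2
      rw [setIntegral_const, smul_eq_mul, measureReal_def] at h2
      have h3 : (volume K).toReal ≤ (volume P).toReal :=
        ENNReal.toReal_mono hPfin.ne (measure_mono hKP)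
      have h4 : (∫ x in K, (f x - fk k x) ^ 2) ≤ (volume P).toReal * η ^ 2 :=
        le_trans h2 (by nlinarith [sq_nonneg η])
      have hv0 : (0:ℝ) ≤ Real.sqrt ((volume P).toReal) := Real.sqrt_nonneg _
      calc Real.sqrt (∫ x in K, (f x - fk k x) ^ 2)
          ≤ Real.sqrt ((volume P).toReal * η ^ 2) := Real.sqrt_le_sqrt h4
        _ = Real.sqrt ((volume P).toReal) * η := by
            rw [Real.sqrt_mul ENNReal.toReal_nonneg, Real.sqrt_sq hη0.le]
        _ ≤ δ := by
            rw [hη]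
            calc Real.sqrt ((volume P).toReal) * (δ / (Real.sqrt ((volume P).toReal) + 1))
                = δ * (Real.sqrt ((volume P).toReal) / (Real.sqrt ((volume P).toReal) + 1)) := by
                  ring
              _ ≤ δ * 1 := by
                  refine mul_le_mul_of_nonneg_left ?_ hδ0.le
                  rw [div_le_one (by linarith)]
                  linarith
              _ = δ := mul_one δ
    -- pick a good index k
    have hfreq : ∃ᶠ k in atTop, a k < L + δ := by
      refine frequently_lt_of_liminf_lt hBddAbove.isCoboundedUnder_ge ?_
      rw [← hLdef]
      linarith
    obtain ⟨k, hk1, hk2, hk3⟩ :=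
      (hfreq.and_eventually (hbev.and (eventually_ge_atTop N))).exists
    -- split the integral
    have hintP : Integrable (fun x => (f x - g x) * (f x - gk k x)) (volume.restrict P) :=
      integrable_mul2 hfg2 (hf2.sub (hgk2 k))
    have hsplit : (∫ x in P, (f x - g x) * (f x - gk k x)) =
        (∫ x in K, (f x - g x) * (f x - gk k x)) +
          ∫ x in P \ K, (f x - g x) * (f x - gk k x) := by
      have h := integral_diff hKmeas hintP hKP
      linarith
    -- main term estimate
    have hfgkK : MemLp (fun x => f x - gk k x) 2 (volume.restrict K) :=
      (hf2.sub (hgk2 k)).mono_measure hrK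
    have hmainterm : (∫ x in K, (f x - g x) * (f x - gk k x)) ≤ S * (δ + (L + δ)) := by
      have hcs := int_mul_le hfgK hfgkK
      have e1 : Real.sqrt (∫ x in K, (f x - g x) ^ 2) ≤ S := by
        rw [hSdef]
        exact Real.sqrt_le_sqrt (setIntegral_mono_set hfg2.integrable_sq
          (Eventually.of_forall fun x => sq_nonneg _) (HasSubset.Subset.eventuallyLE hKP))
      have e2 : Real.sqrt (∫ x in K, (f x - gk k x) ^ 2) ≤ δ + (L + δ) := by
        have emink : Real.sqrt (∫ x in K, (f x - gk k x) ^ 2) ≤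
            Real.sqrt (∫ x in K, (f x - fk k x) ^ 2) +
              Real.sqrt (∫ x in K, (fk k x - gk k x) ^ 2) := by
          have h := sqrt_int_add_le (μ := volume.restrict K)
            (u := fun x => f x - fk k x) (v := fun x => fk k x - gk k x)
            (hfK.sub ((hfk2 k).mono_measure hrK))
            (((hfk2 k).mono_measure hrK).sub ((hgk2 k).mono_measure hrK))
          have hrw : ∀ x : EuclideanSpace ℝ (Fin n),
              (f x - fk k x) + (fk k x - gk k x) = f x - gk k x := fun x => by ring
          simp_rw [hrw] at h
          exact h
        have e3 : Real.sqrt (∫ x in K, (fk k x - gk k x) ^ 2) ≤ a k := by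
          rw [hadef]
          exact Real.sqrt_le_sqrt (setIntegral_mono_set (hdiff2 k).integrable_sq
            (Eventually.of_forall fun x => sq_nonneg _) (HasSubset.Subset.eventuallyLE hKP))
        linarith [hk1.le]
      calc (∫ x in K, (f x - g x) * (f x - gk k x))
          ≤ Real.sqrt (∫ x in K, (f x - g x) ^ 2) *
              Real.sqrt (∫ x in K, (f x - gk k x) ^ 2) := hcs
        _ ≤ S * (δ + (L + δ)) :=
            mul_le_mul e1 e2 (Real.sqrt_nonneg _) hS0
    -- tail term estimate
    have htail : (∫ x in P \ K, (f x - g x) * (f x - gk k x)) ≤ ε / 2 := by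
      have hcs := int_mul_le hfgD ((hf2.sub (hgk2 k)).mono_measure hrD)
      have e4 : Real.sqrt (∫ x in P \ K, (f x - gk k x) ^ 2) ≤ W := by
        have hminD : Real.sqrt (∫ x in P \ K, (f x - gk k x) ^ 2) ≤
            Real.sqrt (∫ x in P \ K, f x ^ 2) +
              Real.sqrt (∫ x in P \ K, (gk k x) ^ 2) := by
          have h := sqrt_int_add_le (μ := volume.restrict (P \ K))
            (u := f) (v := fun x => - gk k x) hfD (((hgk2 k).mono_measure hrD).neg)
          have hrw : ∀ x : EuclideanSpace ℝ (Fin n),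
              (f x + - gk k x) ^ 2 = (f x - gk k x) ^ 2 := fun x => by ring
          have hrw2 : ∀ x : EuclideanSpace ℝ (Fin n),
              (- gk k x) ^ 2 = (gk k x) ^ 2 := fun x => by ring
          simp_rw [hrw, hrw2] at h
          exact h
        have e5 : Real.sqrt (∫ x in P \ K, f x ^ 2) ≤ Real.sqrt (∫ x in P, f x ^ 2) :=
          Real.sqrt_le_sqrt (setIntegral_mono_set hA
            (Eventually.of_forall fun x => sq_nonneg _)
            (HasSubset.Subset.eventuallyLE Set.diff_subset))
        have e6 : Real.sqrt (∫ x in P \ K, (gk k x) ^ 2) ≤ Real.sqrt G2 := by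
          refine Real.sqrt_le_sqrt ?_
          refine le_trans (setIntegral_mono_set (hgk2 k).integrable_sq
            (Eventually.of_forall fun x => sq_nonneg _)
            (HasSubset.Subset.eventuallyLE Set.diff_subset)) (hG2 k hk3)
        rw [hW]
        linarith
      have e7 : (0:ℝ) ≤ ε / (2 * (W + 1)) := by positivity
      calc (∫ x in P \ K, (f x - g x) * (f x - gk k x))
          ≤ Real.sqrt (∫ x in P \ K, (f x - g x) ^ 2) *
              Real.sqrt (∫ x in P \ K, (f x - gk k x) ^ 2) := hcs
        _ ≤ (ε / (2 * (W + 1))) * W :=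
            mul_le_mul hTled e4 (Real.sqrt_nonneg _) e7
        _ ≤ ε / 2 := by
            rw [div_mul_eq_mul_div, div_le_div_iff₀ (by positivity) (by norm_num)]
            nlinarith
    -- combine
    have hSδ : S * (δ + (L + δ)) = S * L + S * (2 * δ) := by ring
    have hδS : S * (2 * δ) ≤ ε / 2 := by
      have hs1 : S / (S + 1) ≤ 1 := by
        rw [div_le_one (by linarith)]; linarith
      have heq : S * (2 * δ) = (S / (S + 1)) * (ε / 2) := by
        rw [hδ]; field_simp; ring
      rw [heq]
      calc (S / (S + 1)) * (ε / 2) ≤ 1 * (ε / 2) :=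
            mul_le_mul_of_nonneg_right hs1 (by positivity)
        _ = ε / 2 := one_mul _
    have : S ^ 2 = (∫ x in K, (f x - g x) * (f x - gk k x)) +
        ∫ x in P \ K, (f x - g x) * (f x - gk k x) := by
      rw [hS2, key1 k, hsplit]
    linarith
  -- conclude
  have hSL : S ^ 2 ≤ S * L := by
    by_contra hcon
    push_neg at hcon
    have := hmain ((S ^ 2 - S * L) / 2) (by linarith)
    linarith
  rcases eq_or_lt_of_le hS0 with h0 | h0
  · exact h0 ▸ hL0
  · have hSS : S * S ≤ S * L := by nlinarith
    exact le_of_mul_le_mul_left hSS h0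

end Main

theorem seminorm_lsc_under_locally_uniform_convergence
    {n : ℕ} (P : Set (EuclideanSpace ℝ (Fin n)))
    (hPcomp : IsCompact P) (hPconv : Convex ℝ P)
    (hP0 : (0 : EuclideanSpace ℝ (Fin n)) ∈ interior P)
    (f : EuclideanSpace ℝ (Fin n) → ℝ)
    (fk : ℕ → EuclideanSpace ℝ (Fin n) → ℝ)
    (hfkc : ∀ k, ContinuousOn (fk k) P)
    (hfkconv : ∀ k, ConvexOn ℝ P (fk k))
    (hfknn : ∀ k, ∀ x ∈ P, 0 ≤ fk k x)
    (hfk0 : ∀ k, fk k 0 = 0)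
    (hconv : ∀ K : Set (EuclideanSpace ℝ (Fin n)), K ⊆ interior P → IsCompact K →
      TendstoUniformlyOn fk f atTop K)
    (gk : ℕ → EuclideanSpace ℝ (Fin n) →ᵃ[ℝ] ℝ)
    -- gk k is the L²(P)-orthogonal projection of fk k onto affine functions:
    (hgk : ∀ k, ∀ a : EuclideanSpace ℝ (Fin n) →ᵃ[ℝ] ℝ,
      ∫ x in P, (fk k x - gk k x) * a x = 0)
    (C₁ : ℝ)
    (hbd : ∀ k, Real.sqrt (∫ x in P, (fk k x - gk k x) ^ 2) ≤ C₁) :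
    IntegrableOn (fun x => f x ^ 2) P volume ∧
      ∀ g : EuclideanSpace ℝ (Fin n) →ᵃ[ℝ] ℝ,
        (∀ a : EuclideanSpace ℝ (Fin n) →ᵃ[ℝ] ℝ,
          ∫ x in P, (f x - g x) * a x = 0) →
        Real.sqrt (∫ x in P, (f x - g x) ^ 2) ≤
          liminf (fun k => Real.sqrt (∫ x in P, (fk k x - gk k x) ^ 2)) atTop := by
  exact seminorm_lsc_under_locally_uniform_convergence' P hPcomp hPconv hP0 f fk hfkc hconv
    gk hgk C₁ hbd
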